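/- Let q ∈ ℂ* with |q| ≠ 1 and let a ∈ ℂ(z)*. If there exist a nonzero integer n, an element h ∈ ℂ(z)* and μ ∈ ℂ* such that a^n = μ·σ_q(h)/h, then there exist g ∈ ℂ(z)* and λ ∈ ℂ* such that a = λ·σ_q(g)/g and λ^n ∈ μ·q^ℤ (i.e. λ^n = μ·q^s for some integer s). -/

import Mathlib

/-!
Setting: fix `q ∈ ℂ*` with `|q| ≠ 1`.  We work with meromorphic functions on the
punctured plane `ℂ* = {z ≠ 0}`, represented as plain functions `ℂ → ℂ` together
with a `MeromorphicOn` hypothesis; all identities between meromorphic functions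
are understood to hold off a countable (discrete) exceptional set (`MZeroOn`).

* `CE q` is the field `C_E` of `σ_q`-invariant meromorphic functions on `ℂ*`;
* `KE q` is the field `K_E = C_E(z)`;
* `AlgIndepOver U K g` says that the family `g` of meromorphic functions on `U`
  is algebraically independent over the coefficient field `K`: every polynomial
  with coefficients in `K` that vanishes (as meromorphic function on `U`) at the
  family has all its coefficients zero as meromorphic functions;
* `delq` is the derivation `∂ = z·d/dz` on functions, `dRat` the corresponding
  derivation on rational functions;
* `sigmaq q` is the substitution `z ↦ qz` on rational functions `RatFunc ℂ`;
* `QDE q a f` is the q-difference equation `f(qz) = a(z)·f(z)` as an identity of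
  meromorphic functions on `ℂ*` (written without denominators);
* `ordAt a c` is the order of vanishing of the rational function `a` at `c`, and
  `divE q hq a` is the elliptic divisor of `a`, an element of the free abelian
  group on `ℂ*/q^ℤ` (realised as a finitely supported `ℤ`-valued function on the
  quotient group `ℂˣ ⧸ zpowers q`).
-/

open scoped Classical

noncomputable section

/-- The punctured complex plane ℂ*. -/
def Cstar : Set ℂ := {z : ℂ | z ≠ 0}

/-- `f` represents the zero meromorphic function on `U`:
it vanishes off a countable exceptional set. -/
def MZeroOn (U : Set ℂ) (f : ℂ → ℂ) : Prop :=
  ∃ S : Set ℂ, S.Countable ∧ ∀ z ∈ U \ S, f z = 0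

/-- `f` is a nonzero meromorphic function on `U`. -/
def MerNonzero (U : Set ℂ) (f : ℂ → ℂ) : Prop :=
  MeromorphicOn f U ∧ ¬ MZeroOn U f

/-- The derivation ∂ = z·d/dz. -/
def delq (f : ℂ → ℂ) : ℂ → ℂ := fun z => z * deriv f z

/-- The field C_E of σ_q-invariant meromorphic functions on ℂ*. -/
def CE (q : ℂ) : Set (ℂ → ℂ) :=
  {c | MeromorphicOn c Cstar ∧ ∀ z : ℂ, c (q * z) = c z}

/-- Evaluation of a polynomial with function coefficients at the coordinate z. -/
def evalz (P : Polynomial (ℂ → ℂ)) : ℂ → ℂ :=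
  Polynomial.eval (fun z : ℂ => z) P

/-- The field K_E = C_E(z): quotients of polynomials in z with coefficients in C_E. -/
def KE (q : ℂ) : Set (ℂ → ℂ) :=
  {f | ∃ Np Dp : Polynomial (ℂ → ℂ),
        (∀ i, Np.coeff i ∈ CE q) ∧ (∀ i, Dp.coeff i ∈ CE q) ∧
        ¬ MZeroOn Cstar (evalz Dp) ∧
        MZeroOn Cstar (fun z => f z * evalz Dp z - evalz Np z)}

/-- The family `g` of meromorphic functions on `U` is algebraically independent
over the set `K` of coefficient functions. -/
def AlgIndepOver (U : Set ℂ) (K : Set (ℂ → ℂ)) {ι : Type} (g : ι → ℂ → ℂ) : Prop :=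
  ∀ P : MvPolynomial ι (ℂ → ℂ),
    (∀ m, MvPolynomial.coeff m P ∈ K) →
    MZeroOn U (MvPolynomial.eval g P) →
    ∀ m, MZeroOn U (MvPolynomial.coeff m P)

/-- σ_q acting on rational functions: (σ_q a)(z) = a(qz). -/
def sigmaq (q : ℂ) (a : RatFunc ℂ) : RatFunc ℂ :=
  algebraMap (Polynomial ℂ) (RatFunc ℂ) (a.num.comp (Polynomial.C q * Polynomial.X)) /
    algebraMap (Polynomial ℂ) (RatFunc ℂ) (a.denom.comp (Polynomial.C q * Polynomial.X))

/-- The q-difference equation f(qz) = a(z)·f(z), as an identity of meromorphic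
functions on ℂ* (denominators cleared). -/
def QDE (q : ℂ) (a : RatFunc ℂ) (f : ℂ → ℂ) : Prop :=
  MZeroOn Cstar (fun z => f (q * z) * Polynomial.eval z a.denom - Polynomial.eval z a.num * f z)

/-- Order of vanishing of a rational function at a point. -/
def ordAt (a : RatFunc ℂ) (c : ℂ) : ℤ :=
  (Polynomial.rootMultiplicity c a.num : ℤ) - (Polynomial.rootMultiplicity c a.denom : ℤ)

/-- The elliptic divisor of a rational function: the image in Div(ℂ*/q^ℤ) of the
part of its divisor prime to 0, as a (finitely supported) ℤ-valued function on
the quotient group ℂˣ/q^ℤ. -/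
def divE (q : ℂ) (hq : q ≠ 0) (a : RatFunc ℂ) :
    (ℂˣ ⧸ Subgroup.zpowers (Units.mk0 q hq)) → ℤ := fun c =>
  ∑ᶠ α : ℂˣ,
    if (QuotientGroup.mk α : ℂˣ ⧸ Subgroup.zpowers (Units.mk0 q hq)) = c then
      ordAt a (α : ℂ) else 0

/-- An element of ℂ(z)* is standard if no two points of its divisor away from 0
are congruent modulo q^ℤ: if c ∈ ℂ* is a zero or pole of a and m ≠ 0, then q^m·c
is not a zero or pole of a. -/
def StandardQ (q : ℂ) (a : RatFunc ℂ) : Prop :=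
  ∀ c : ℂ, c ≠ 0 → ordAt a c ≠ 0 → ∀ m : ℤ, m ≠ 0 → ordAt a (q ^ m * c) = 0

/-- The derivation ∂ = z·d/dz on rational functions. -/
def dRat (a : RatFunc ℂ) : RatFunc ℂ :=
  RatFunc.X *
    ((algebraMap (Polynomial ℂ) (RatFunc ℂ) (Polynomial.derivative a.num) *
        algebraMap (Polynomial ℂ) (RatFunc ℂ) a.denom -
      algebraMap (Polynomial ℂ) (RatFunc ℂ) a.num *
        algebraMap (Polynomial ℂ) (RatFunc ℂ) (Polynomial.derivative a.denom)) /
      algebraMap (Polynomial ℂ) (RatFunc ℂ) a.denom ^ 2)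

section AuxStatement15
open Polynomial

variable {q : ℂ}

lemma comp_qX_inj (hq : q ≠ 0) : Function.Injective (fun p : ℂ[X] => p.comp (C q * X)) := by
  intro p r h
  simp only at h
  have h2 : (p.comp (C q * X)).comp (C q⁻¹ * X) = (r.comp (C q * X)).comp (C q⁻¹ * X) := by rw [h]
  rw [Polynomial.comp_assoc, Polynomial.comp_assoc] at h2
  simpa [Polynomial.mul_comp, Polynomial.C_comp, Polynomial.X_comp, ← mul_assoc,
    ← Polynomial.C_mul, mul_inv_cancel₀ hq] using h2

lemma comp_qX_ne_zero (hq : q ≠ 0) {p : ℂ[X]} (hp : p ≠ 0) : p.comp (C q * X) ≠ 0 := by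
  intro h
  exact hp (comp_qX_inj hq (by simpa using h))

lemma sub_comp_qX (u : ℂ) : (X - Polynomial.C (q*u)).comp (C q * X) = C q * (X - Polynomial.C u) := by
  rw [Polynomial.sub_comp, Polynomial.X_comp, Polynomial.C_comp, Polynomial.C_mul, mul_sub]

lemma dvd_comp_qX (hq : q ≠ 0) (p : ℂ[X]) (c : ℂ) (k : ℕ) (h : (X - Polynomial.C (q*c))^k ∣ p) :
    (X - Polynomial.C c)^k ∣ p.comp (C q * X) := by
  obtain ⟨s, hs⟩ := h
  refine ⟨Polynomial.C (q^k) * s.comp (C q * X), ?_⟩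
  rw [hs, Polynomial.mul_comp, Polynomial.pow_comp, sub_comp_qX, mul_pow, ← Polynomial.C_pow]
  ring

lemma rm_comp (hq : q ≠ 0) {p : ℂ[X]} (hp : p ≠ 0) (c : ℂ) :
    rootMultiplicity c (p.comp (C q * X)) = rootMultiplicity (q * c) p := by
  have hpc := comp_qX_ne_zero hq hp
  apply le_antisymm
  · rw [Polynomial.le_rootMultiplicity_iff hp]
    have := dvd_comp_qX (inv_ne_zero hq) (p.comp (C q * X)) (q * c)
      (rootMultiplicity c (p.comp (C q * X)))
      (by rw [inv_mul_cancel_left₀ hq]; exact Polynomial.pow_rootMultiplicity_dvd _ _)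
    rw [Polynomial.comp_assoc] at this
    have hqq : (C q * X).comp (C q⁻¹ * X) = (X : ℂ[X]) := by
      rw [Polynomial.mul_comp, Polynomial.C_comp, Polynomial.X_comp, ← mul_assoc,
        ← Polynomial.C_mul, mul_inv_cancel₀ hq, Polynomial.C_1, one_mul]
    rwa [hqq, Polynomial.comp_X] at this
  · rw [Polynomial.le_rootMultiplicity_iff hpc]
    exact dvd_comp_qX hq p c _ (Polynomial.pow_rootMultiplicity_dvd _ _)

lemma cross {p r : ℂ[X]} (hr : r ≠ 0) :
    (algebraMap ℂ[X] (RatFunc ℂ) p / algebraMap ℂ[X] (RatFunc ℂ) r).num * r =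
    p * (algebraMap ℂ[X] (RatFunc ℂ) p / algebraMap ℂ[X] (RatFunc ℂ) r).denom := by
  set a := algebraMap ℂ[X] (RatFunc ℂ) p / algebraMap ℂ[X] (RatFunc ℂ) r with ha
  apply RatFunc.algebraMap_injective ℂ
  rw [map_mul, map_mul]
  have h1 : algebraMap ℂ[X] (RatFunc ℂ) a.num = a * algebraMap ℂ[X] (RatFunc ℂ) a.denom := by
    rw [← div_eq_iff (RatFunc.algebraMap_ne_zero a.denom_ne_zero)]
    exact RatFunc.num_div_denom a
  rw [h1]
  generalize algebraMap ℂ[X] (RatFunc ℂ) a.denom = D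
  rw [ha]
  field_simp [RatFunc.algebraMap_ne_zero hr]

lemma ordAt_div {p r : ℂ[X]} (hp : p ≠ 0) (hr : r ≠ 0) (c : ℂ) :
    ordAt (algebraMap ℂ[X] (RatFunc ℂ) p / algebraMap ℂ[X] (RatFunc ℂ) r) c =
    (rootMultiplicity c p : ℤ) - rootMultiplicity c r := by
  set a := algebraMap ℂ[X] (RatFunc ℂ) p / algebraMap ℂ[X] (RatFunc ℂ) r with ha
  have hane : a ≠ 0 := by
    apply div_ne_zero (RatFunc.algebraMap_ne_zero hp) (RatFunc.algebraMap_ne_zero hr)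
  have hnum : a.num ≠ 0 := RatFunc.num_ne_zero hane
  have hden : a.denom ≠ 0 := a.denom_ne_zero
  have h := congrArg (rootMultiplicity c) (cross hr (p := p))
  rw [Polynomial.rootMultiplicity_mul (mul_ne_zero hnum hr),
    Polynomial.rootMultiplicity_mul (mul_ne_zero hp hden)] at h
  unfold ordAt
  omega

lemma ordAt_one (c : ℂ) : ordAt 1 c = 0 := by
  have : (1 : RatFunc ℂ) = algebraMap ℂ[X] (RatFunc ℂ) 1 / algebraMap ℂ[X] (RatFunc ℂ) 1 := by
    simp
  rw [this, ordAt_div one_ne_zero one_ne_zero]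
  simp [Polynomial.rootMultiplicity_eq_zero_iff]

lemma ordAt_mul {a b : RatFunc ℂ} (ha : a ≠ 0) (hb : b ≠ 0) (c : ℂ) :
    ordAt (a * b) c = ordAt a c + ordAt b c := by
  have h : a * b = algebraMap ℂ[X] (RatFunc ℂ) (a.num * b.num) /
      algebraMap ℂ[X] (RatFunc ℂ) (a.denom * b.denom) := by
    rw [map_mul, map_mul, ← div_mul_div_comm, RatFunc.num_div_denom, RatFunc.num_div_denom]
  rw [h, ordAt_div (mul_ne_zero (RatFunc.num_ne_zero ha) (RatFunc.num_ne_zero hb))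
      (mul_ne_zero a.denom_ne_zero b.denom_ne_zero),
    Polynomial.rootMultiplicity_mul (mul_ne_zero (RatFunc.num_ne_zero ha) (RatFunc.num_ne_zero hb)),
    Polynomial.rootMultiplicity_mul (mul_ne_zero a.denom_ne_zero b.denom_ne_zero)]
  unfold ordAt
  push_cast
  ring

lemma ordAt_inv {a : RatFunc ℂ} (ha : a ≠ 0) (c : ℂ) : ordAt a⁻¹ c = - ordAt a c := by
  have h1 : ordAt (a⁻¹ * a) c = ordAt a⁻¹ c + ordAt a c := ordAt_mul (inv_ne_zero ha) ha c
  rw [inv_mul_cancel₀ ha, ordAt_one] at h1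
  omega

lemma ordAt_pow {a : RatFunc ℂ} (ha : a ≠ 0) (k : ℕ) (c : ℂ) :
    ordAt (a ^ k) c = k * ordAt a c := by
  induction k with
  | zero => simpa using ordAt_one c
  | succ k ih =>
    rw [pow_succ, ordAt_mul (pow_ne_zero k ha) ha, ih]
    push_cast
    ring

lemma ordAt_zpow {a : RatFunc ℂ} (ha : a ≠ 0) (k : ℤ) (c : ℂ) :
    ordAt (a ^ k) c = k * ordAt a c := by
  cases k with
  | ofNat k => simpa using ordAt_pow ha k c
  | negSucc k =>
    rw [zpow_negSucc, ordAt_inv (pow_ne_zero _ ha), ordAt_pow ha, Int.negSucc_eq]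
    push_cast
    ring

lemma ordAt_C {μ : ℂ} (hμ : μ ≠ 0) (c : ℂ) : ordAt (RatFunc.C μ) c = 0 := by
  have : (RatFunc.C μ : RatFunc ℂ) = algebraMap ℂ[X] (RatFunc ℂ) (Polynomial.C μ) /
      algebraMap ℂ[X] (RatFunc ℂ) 1 := by
    rw [RatFunc.algebraMap_C, map_one, div_one]
  rw [this, ordAt_div (by simpa using hμ) one_ne_zero]
  simp [Polynomial.rootMultiplicity_eq_zero_iff, hμ]

lemma sigmaq_div (hq : q ≠ 0) {p r : ℂ[X]} (hp : p ≠ 0) (hr : r ≠ 0) :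
    sigmaq q (algebraMap ℂ[X] (RatFunc ℂ) p / algebraMap ℂ[X] (RatFunc ℂ) r) =
    algebraMap ℂ[X] (RatFunc ℂ) (p.comp (Polynomial.C q * Polynomial.X)) /
    algebraMap ℂ[X] (RatFunc ℂ) (r.comp (Polynomial.C q * Polynomial.X)) := by
  set a := algebraMap ℂ[X] (RatFunc ℂ) p / algebraMap ℂ[X] (RatFunc ℂ) r with ha
  have hc := congrArg (fun s : ℂ[X] => s.comp (Polynomial.C q * Polynomial.X)) (cross hr (p := p))
  simp only [Polynomial.mul_comp] at hc
  unfold sigmaq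
  rw [div_eq_div_iff
    (RatFunc.algebraMap_ne_zero (comp_qX_ne_zero hq a.denom_ne_zero))
    (RatFunc.algebraMap_ne_zero (comp_qX_ne_zero hq hr)),
    ← map_mul, ← map_mul, hc, mul_comm]

lemma sigmaq_eq_num_denom (a : RatFunc ℂ) : sigmaq q a =
    algebraMap ℂ[X] (RatFunc ℂ) (a.num.comp (Polynomial.C q * Polynomial.X)) /
    algebraMap ℂ[X] (RatFunc ℂ) (a.denom.comp (Polynomial.C q * Polynomial.X)) := rfl

lemma sigmaq_ne_zero (hq : q ≠ 0) {a : RatFunc ℂ} (ha : a ≠ 0) : sigmaq q a ≠ 0 :=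
  div_ne_zero (RatFunc.algebraMap_ne_zero (comp_qX_ne_zero hq (RatFunc.num_ne_zero ha)))
    (RatFunc.algebraMap_ne_zero (comp_qX_ne_zero hq a.denom_ne_zero))

lemma ordAt_sigmaq (hq : q ≠ 0) {a : RatFunc ℂ} (ha : a ≠ 0) (c : ℂ) :
    ordAt (sigmaq q a) c = ordAt a (q * c) := by
  rw [sigmaq_eq_num_denom, ordAt_div (comp_qX_ne_zero hq (RatFunc.num_ne_zero ha))
    (comp_qX_ne_zero hq a.denom_ne_zero), rm_comp hq (RatFunc.num_ne_zero ha),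
    rm_comp hq a.denom_ne_zero]
  rfl

lemma sigmaq_mul (hq : q ≠ 0) {a b : RatFunc ℂ} (ha : a ≠ 0) (hb : b ≠ 0) :
    sigmaq q (a * b) = sigmaq q a * sigmaq q b := by
  have h : a * b = algebraMap ℂ[X] (RatFunc ℂ) (a.num * b.num) /
      algebraMap ℂ[X] (RatFunc ℂ) (a.denom * b.denom) := by
    rw [map_mul, map_mul, ← div_mul_div_comm, RatFunc.num_div_denom, RatFunc.num_div_denom]
  conv_lhs => rw [h]
  conv_rhs => rw [← RatFunc.num_div_denom a, ← RatFunc.num_div_denom b]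
  rw [sigmaq_div hq (mul_ne_zero (RatFunc.num_ne_zero ha) (RatFunc.num_ne_zero hb))
      (mul_ne_zero a.denom_ne_zero b.denom_ne_zero),
    sigmaq_div hq (RatFunc.num_ne_zero ha) a.denom_ne_zero,
    sigmaq_div hq (RatFunc.num_ne_zero hb) b.denom_ne_zero,
    Polynomial.mul_comp, Polynomial.mul_comp, map_mul, map_mul, div_mul_div_comm]

lemma sigmaq_one (hq : q ≠ 0) : sigmaq q (1 : RatFunc ℂ) = 1 := by
  have : (1 : RatFunc ℂ) = algebraMap ℂ[X] (RatFunc ℂ) 1 / algebraMap ℂ[X] (RatFunc ℂ) 1 := by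
    simp
  rw [this, sigmaq_div hq one_ne_zero one_ne_zero]
  simp

lemma sigmaq_inv (hq : q ≠ 0) {a : RatFunc ℂ} (ha : a ≠ 0) : sigmaq q a⁻¹ = (sigmaq q a)⁻¹ := by
  have h1 : sigmaq q (a⁻¹ * a) = sigmaq q a⁻¹ * sigmaq q a := sigmaq_mul hq (inv_ne_zero ha) ha
  rw [inv_mul_cancel₀ ha, sigmaq_one hq] at h1
  exact eq_inv_of_mul_eq_one_left h1.symm

lemma sigmaq_pow (hq : q ≠ 0) {a : RatFunc ℂ} (ha : a ≠ 0) (k : ℕ) :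
    sigmaq q (a ^ k) = sigmaq q a ^ k := by
  induction k with
  | zero => simpa using sigmaq_one hq
  | succ k ih => rw [pow_succ, sigmaq_mul hq (pow_ne_zero k ha) ha, ih, pow_succ]

lemma sigmaq_zpow (hq : q ≠ 0) {a : RatFunc ℂ} (ha : a ≠ 0) (k : ℤ) :
    sigmaq q (a ^ k) = sigmaq q a ^ k := by
  cases k with
  | ofNat k => simpa using sigmaq_pow hq ha k
  | negSucc k => rw [zpow_negSucc, sigmaq_inv hq (pow_ne_zero _ ha), sigmaq_pow hq ha, zpow_negSucc]

lemma sigmaq_C (hq : q ≠ 0) (μ : ℂ) : sigmaq q (RatFunc.C μ : RatFunc ℂ) = RatFunc.C μ := by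
  rcases eq_or_ne μ 0 with rfl | hμ
  · simp only [map_zero]
    rw [show (0 : RatFunc ℂ) = algebraMap ℂ[X] (RatFunc ℂ) 0 / algebraMap ℂ[X] (RatFunc ℂ) 1 by simp]
    unfold sigmaq
    simp
  · rw [← RatFunc.algebraMap_C (K := ℂ) μ, show algebraMap ℂ[X] (RatFunc ℂ) (Polynomial.C μ) =
      algebraMap ℂ[X] (RatFunc ℂ) (Polynomial.C μ) / algebraMap ℂ[X] (RatFunc ℂ) 1 by simp,
      sigmaq_div hq (by simpa using hμ) one_ne_zero]
    simp

lemma ordAt_support_finite {a : RatFunc ℂ} (ha : a ≠ 0) : {c : ℂ | ordAt a c ≠ 0}.Finite := by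
  apply Set.Finite.subset (Set.Finite.union
    (Polynomial.finite_setOf_isRoot (RatFunc.num_ne_zero ha))
    (Polynomial.finite_setOf_isRoot a.denom_ne_zero))
  intro c hc
  by_contra hmem
  simp only [Set.mem_union, Set.mem_setOf_eq, not_or] at hmem
  apply hc
  unfold ordAt
  rw [Polynomial.rootMultiplicity_eq_zero hmem.1, Polynomial.rootMultiplicity_eq_zero hmem.2]
  simp

lemma eq_C_of_ordAt_eq_zero {a : RatFunc ℂ} (ha : a ≠ 0) (h : ∀ c, ordAt a c = 0) :
    ∃ γ : ℂ, γ ≠ 0 ∧ a = RatFunc.C γ := by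
  have hnum := RatFunc.num_ne_zero ha
  have hcop := a.isCoprime_num_denom
  have noroot : ∀ p : ℂ[X], p ∣ a.num ∨ p ∣ a.denom → True := fun _ _ => trivial
  have hnr : ∀ c : ℂ, ¬ a.num.IsRoot c := by
    intro c hroot
    have h1 : 0 < a.num.rootMultiplicity c := (Polynomial.rootMultiplicity_pos hnum).2 hroot
    have h2 : 0 < a.denom.rootMultiplicity c := by
      have := h c; unfold ordAt at this; omega
    have hroot2 : a.denom.IsRoot c := (Polynomial.rootMultiplicity_pos a.denom_ne_zero).1 h2
    obtain ⟨u, v, huv⟩ := hcop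
    have := congrArg (Polynomial.eval c) huv
    simp [hroot.eq_zero, hroot2.eq_zero] at this
  have hdr : ∀ c : ℂ, ¬ a.denom.IsRoot c := by
    intro c hroot
    have h2 : 0 < a.num.rootMultiplicity c := by
      have h1 : 0 < a.denom.rootMultiplicity c := (Polynomial.rootMultiplicity_pos a.denom_ne_zero).2 hroot
      have := h c; unfold ordAt at this; omega
    exact hnr c ((Polynomial.rootMultiplicity_pos hnum).1 h2)
  have hdeg1 : a.num.degree = 0 := by
    by_contra hd
    obtain ⟨x, hx⟩ := IsAlgClosed.exists_root a.num hd
    exact hnr x hx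
  have hdeg2 : a.denom.degree = 0 := by
    by_contra hd
    obtain ⟨x, hx⟩ := IsAlgClosed.exists_root a.denom hd
    exact hdr x hx
  obtain ⟨n0, hn0⟩ : ∃ n0, a.num = Polynomial.C n0 :=
    ⟨_, Polynomial.eq_C_of_degree_le_zero hdeg1.le⟩
  obtain ⟨d0, hd0⟩ : ∃ d0, a.denom = Polynomial.C d0 :=
    ⟨_, Polynomial.eq_C_of_degree_le_zero hdeg2.le⟩
  have hn0' : n0 ≠ 0 := by rintro rfl; rw [hn0] at hnum; simp at hnum
  have hd0' : d0 ≠ 0 := by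
    have := a.denom_ne_zero; rintro rfl; rw [hd0] at this; simp at this
  refine ⟨n0 / d0, div_ne_zero hn0' hd0', ?_⟩
  rw [← RatFunc.num_div_denom a, hn0, hd0, RatFunc.algebraMap_C, RatFunc.algebraMap_C, map_div₀]

lemma ordAt_X_sub_C (d c : ℂ) :
    ordAt (RatFunc.X - RatFunc.C d) c = if c = d then 1 else 0 := by
  have h : (RatFunc.X - RatFunc.C d : RatFunc ℂ) =
      algebraMap ℂ[X] (RatFunc ℂ) (Polynomial.X - Polynomial.C d) /
      algebraMap ℂ[X] (RatFunc ℂ) 1 := by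
    rw [map_sub, RatFunc.algebraMap_X, RatFunc.algebraMap_C, map_one, div_one]
  rw [h, ordAt_div (Polynomial.X_sub_C_ne_zero d) one_ne_zero]
  rw [Polynomial.rootMultiplicity_X_sub_C]
  by_cases hcd : c = d <;> simp [hcd, Polynomial.rootMultiplicity_eq_zero_iff]

lemma ordAt_X (c : ℂ) : ordAt (RatFunc.X) c = if c = 0 then 1 else 0 := by
  have := ordAt_X_sub_C 0 c
  simpa using this

lemma X_sub_C_ne_zero' (d : ℂ) : (RatFunc.X - RatFunc.C d : RatFunc ℂ) ≠ 0 := by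
  rw [show (RatFunc.X - RatFunc.C d : RatFunc ℂ) =
      algebraMap ℂ[X] (RatFunc ℂ) (Polynomial.X - Polynomial.C d) by
    rw [map_sub, RatFunc.algebraMap_X, RatFunc.algebraMap_C]]
  exact RatFunc.algebraMap_ne_zero (Polynomial.X_sub_C_ne_zero d)

lemma ordAt_prod {F : Finset ℂ} {f : ℂ → RatFunc ℂ} (hf : ∀ d ∈ F, f d ≠ 0) (c : ℂ) :
    ordAt (∏ d ∈ F, f d) c = ∑ d ∈ F, ordAt (f d) c := by
  classical
  induction F using Finset.induction with
  | empty => simpa using ordAt_one c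
  | @insert x F' hd ih =>
    rw [Finset.prod_insert hd, Finset.sum_insert hd,
      ordAt_mul (hf x (Finset.mem_insert_self x F'))
        (Finset.prod_ne_zero_iff.2 fun d hdF => hf d (Finset.mem_insert_of_mem hdF)) c,
      ih fun d hdF => hf d (Finset.mem_insert_of_mem hdF)]

lemma orbit_inj (hq0 : q ≠ 0) (hqa : ‖q‖ ≠ 1) {c : ℂ} (hc : c ≠ 0) :
    Function.Injective (fun N : ℕ => q ^ N * c) := by
  intro i j hij
  simp only at hij
  have h1 : q ^ i = q ^ j := mul_right_cancel₀ hc hij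
  have h2 : ‖q‖ ^ i = ‖q‖ ^ j := by
    rw [← norm_pow, ← norm_pow, h1]
  have h3 := congrArg Real.log h2
  rw [Real.log_pow, Real.log_pow] at h3
  have habs : (0:ℝ) < ‖q‖ := by
    exact norm_pos_iff.mpr hq0
  have h4 : Real.log ‖q‖ ≠ 0 := by
    intro h0
    rcases Real.log_eq_zero.1 h0 with h | h | h
    · exact absurd h habs.ne'
    · exact hqa h
    · linarith
  exact_mod_cast mul_right_cancel₀ h4 h3

lemma exists_orbit_escape (hq0 : q ≠ 0) (hqa : ‖q‖ ≠ 1) {f : RatFunc ℂ} (hf : f ≠ 0)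
    {c : ℂ} (hc : c ≠ 0) : ∃ N : ℕ, ordAt f (q ^ N * c) = 0 := by
  by_contra hcon
  push_neg at hcon
  have hsub : Set.range (fun N : ℕ => q ^ N * c) ⊆ {x : ℂ | ordAt f x ≠ 0} := by
    rintro x ⟨N, rfl⟩
    exact hcon N
  exact Set.infinite_range_of_injective (orbit_inj hq0 hqa hc)
    ((ordAt_support_finite hf).subset hsub)

lemma orbit_telescope {f : RatFunc ℂ} {d : ℂ → ℤ}
    (rel : ∀ x : ℂ, ordAt f (q * x) = ordAt f x + d x) (c : ℂ) (N : ℕ) :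
    ordAt f (q ^ N * c) = ordAt f c + ∑ j ∈ Finset.range N, d (q ^ j * c) := by
  induction N with
  | zero => simp
  | succ N ih =>
    have : q ^ (N + 1) * c = q * (q ^ N * c) := by ring
    rw [this, rel, ih, Finset.sum_range_succ]
    ring

lemma RatC_inj : Function.Injective (RatFunc.C : ℂ →+* RatFunc ℂ) := by
  intro x y hxy
  rw [← RatFunc.algebraMap_C, ← RatFunc.algebraMap_C] at hxy
  exact Polynomial.C_injective (RatFunc.algebraMap_injective ℂ hxy)

lemma RatC_ne_zero {μ : ℂ} (hμ : μ ≠ 0) : (RatFunc.C μ : RatFunc ℂ) ≠ 0 := by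
  rw [← RatFunc.algebraMap_C]
  exact RatFunc.algebraMap_ne_zero (by simpa using hμ)

lemma sigmaq_X (hq0 : q ≠ 0) : sigmaq q (RatFunc.X : RatFunc ℂ) = RatFunc.C q * RatFunc.X := by
  have hX : (RatFunc.X : RatFunc ℂ) =
      algebraMap ℂ[X] (RatFunc ℂ) Polynomial.X / algebraMap ℂ[X] (RatFunc ℂ) 1 := by
    simp [RatFunc.algebraMap_X]
  conv_lhs => rw [hX]
  rw [sigmaq_div hq0 Polynomial.X_ne_zero one_ne_zero, Polynomial.X_comp, Polynomial.one_comp,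
    map_one, div_one, map_mul, RatFunc.algebraMap_C, RatFunc.algebraMap_X]

end AuxStatement15

/-- Lemme 4.8. If `a^n = μ·σ_q(h)/h` for some nonzero integer
`n`, `h ∈ ℂ(z)*` and `μ ∈ ℂ*`, then there exist `g ∈ ℂ(z)*` and `λ ∈ ℂ*` with
`a = λ·σ_q(g)/g` and `λ^n ∈ μ·q^ℤ`. -/
theorem statement15 (q : ℂ) (hq0 : q ≠ 0) (hq : ‖q‖ ≠ 1)
    (a : RatFunc ℂ) (ha : a ≠ 0)
    (n : ℤ) (hn : n ≠ 0) (μ : ℂ) (hμ : μ ≠ 0)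
    (h : RatFunc ℂ) (hh : h ≠ 0)
    (hyp : a ^ n = RatFunc.C μ * sigmaq q h / h) :
    ∃ g : RatFunc ℂ, g ≠ 0 ∧ ∃ lam : ℂ, lam ≠ 0 ∧
      a = RatFunc.C lam * sigmaq q g / g ∧ ∃ s : ℤ, lam ^ n = μ * q ^ s := by
  classical
  have hCμ := RatC_ne_zero hμ
  have hσh := sigmaq_ne_zero hq0 hh
  -- key divisor relation
  have key : ∀ c : ℂ, n * ordAt a c = ordAt h (q * c) - ordAt h c := by
    intro c
    have e := congrArg (fun f => ordAt f c) hyp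
    rw [ordAt_zpow ha, div_eq_mul_inv,
      ordAt_mul (mul_ne_zero hCμ hσh) (inv_ne_zero hh),
      ordAt_mul hCμ hσh, ordAt_C hμ, ordAt_sigmaq hq0 hh, ordAt_inv hh] at e
    omega
  -- divisibility of the divisor of h away from 0
  have hdvd : ∀ c : ℂ, c ≠ 0 → n ∣ ordAt h c := by
    intro c hc
    obtain ⟨N, hN⟩ := exists_orbit_escape hq0 hq hh hc
    have rel : ∀ x : ℂ, ordAt h (q * x) = ordAt h x + n * ordAt a x := by
      intro x; have := key x; omega
    have tel := orbit_telescope rel c N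
    rw [hN, ← Finset.mul_sum] at tel
    exact ⟨-∑ j ∈ Finset.range N, ordAt a (q ^ j * c), by linarith⟩
  set w : ℂ → ℤ := fun c => if c = 0 then 0 else ordAt h c / n with hwdef
  have hw : ∀ c : ℂ, c ≠ 0 → n * w c = ordAt h c := by
    intro c hc
    simp only [hwdef, if_neg hc]
    exact Int.mul_ediv_cancel' (hdvd c hc)
  set F := (ordAt_support_finite hh).toFinset with hF
  set g := ∏ d ∈ F, (RatFunc.X - RatFunc.C d) ^ (w d) with hgdef
  have hg0 : g ≠ 0 :=
    Finset.prod_ne_zero_iff.2 fun d _ => zpow_ne_zero _ (X_sub_C_ne_zero' d)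
  have hσg := sigmaq_ne_zero hq0 hg0
  have hgord : ∀ c : ℂ, ordAt g c = w c := by
    intro c
    rw [hgdef, ordAt_prod (fun d _ => zpow_ne_zero _ (X_sub_C_ne_zero' d)) c]
    have hterm : ∀ d ∈ F, ordAt ((RatFunc.X - RatFunc.C d) ^ (w d)) c =
        if c = d then w d else 0 := by
      intro d _
      rw [ordAt_zpow (X_sub_C_ne_zero' d), ordAt_X_sub_C]
      by_cases hcd : c = d <;> simp [hcd]
    rw [Finset.sum_congr rfl hterm, Finset.sum_ite_eq]
    by_cases hcF : c ∈ F
    · rw [if_pos hcF]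
    · rw [if_neg hcF]
      have hc0 : ordAt h c = 0 := by
        by_contra hcon
        exact hcF ((Set.Finite.mem_toFinset _).2 hcon)
      simp [hwdef, hc0]
  -- the function b = a g / σ(g) is constant
  set b := a * g * (sigmaq q g)⁻¹ with hbdef
  have hb0 : b ≠ 0 := mul_ne_zero (mul_ne_zero ha hg0) (inv_ne_zero hσg)
  have hbord : ∀ c : ℂ, ordAt b c = 0 := by
    intro c
    rw [hbdef, ordAt_mul (mul_ne_zero ha hg0) (inv_ne_zero hσg),
      ordAt_mul ha hg0, ordAt_inv hσg, ordAt_sigmaq hq0 hg0, hgord, hgord]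
    by_cases hc : c = 0
    · subst hc
      have k0 := key 0
      rw [mul_zero] at k0
      have ha0 : ordAt a 0 = 0 := by
        have : n * ordAt a 0 = 0 := by omega
        rcases mul_eq_zero.1 this with h' | h'
        · exact absurd h' hn
        · exact h'
      simp [ha0, mul_zero]
    · have hqc : q * c ≠ 0 := mul_ne_zero hq0 hc
      have e1 := hw c hc
      have e2 := hw (q * c) hqc
      have kc := key c
      have h5 : n * (ordAt a c + w c - w (q * c)) = 0 := by
        rw [mul_sub, mul_add]; omega
      rcases mul_eq_zero.1 h5 with h' | h'
      · exact absurd h' hn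
      · omega
  obtain ⟨lam, hlam0, hblam⟩ := eq_C_of_ordAt_eq_zero hb0 hbord
  have haform : a = RatFunc.C lam * sigmaq q g / g := by
    rw [eq_div_iff hg0]
    rw [hbdef] at hblam
    field_simp at hblam
    linear_combination hblam
  refine ⟨g, hg0, lam, hlam0, haform, ?_⟩
  -- second part: find s with lam^n = μ q^s
  set G := g ^ n with hGdef
  have hG0 : G ≠ 0 := zpow_ne_zero n hg0
  set u := h * G⁻¹ with hudef
  have hu0 : u ≠ 0 := mul_ne_zero hh (inv_ne_zero hG0)
  set ν := lam ^ n * μ⁻¹ with hνdef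
  have hν0 : ν ≠ 0 := mul_ne_zero (zpow_ne_zero n hlam0) (inv_ne_zero hμ)
  have hCν := RatC_ne_zero hν0
  have hσu : sigmaq q u = RatFunc.C ν * u := by
    have e_an : a ^ n = RatFunc.C lam ^ n * (sigmaq q g) ^ n / g ^ n := by
      rw [haform, div_zpow, mul_zpow]
    have hcross : RatFunc.C μ * sigmaq q h * g ^ n =
        RatFunc.C lam ^ n * (sigmaq q g) ^ n * h := by
      have e3 := hyp.symm.trans e_an
      field_simp at e3
      linear_combination e3
    have hσG : sigmaq q G = (sigmaq q g) ^ n := sigmaq_zpow hq0 hg0 n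
    rw [hudef, sigmaq_mul hq0 hh (inv_ne_zero hG0), sigmaq_inv hq0 hG0, hσG, hGdef]
    rw [show RatFunc.C ν = RatFunc.C lam ^ n * (RatFunc.C μ)⁻¹ by
      rw [hνdef, map_mul, map_inv₀, map_zpow₀]]
    have hσgn : (sigmaq q g) ^ n ≠ 0 := zpow_ne_zero n hσg
    field_simp
    linear_combination hcross
  have hord_u : ∀ c : ℂ, ordAt u (q * c) = ordAt u c := by
    intro c
    have e := congrArg (fun f => ordAt f c) hσu
    rw [ordAt_sigmaq hq0 hu0, ordAt_mul hCν hu0, ordAt_C hν0] at e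
    omega
  have huc : ∀ c : ℂ, c ≠ 0 → ordAt u c = 0 := by
    intro c hc
    obtain ⟨N, hN⟩ := exists_orbit_escape hq0 hq hu0 hc
    have rel : ∀ x : ℂ, ordAt u (q * x) = ordAt u x + (fun _ : ℂ => (0:ℤ)) x := by
      intro x; rw [hord_u]; ring
    have tel := orbit_telescope rel c N
    simp only [Finset.sum_const_zero, add_zero] at tel
    rw [hN] at tel
    omega
  set s := ordAt u 0 with hsdef
  refine ⟨s, ?_⟩
  set v := u * RatFunc.X ^ (-s) with hvdef
  have hXs : (RatFunc.X : RatFunc ℂ) ^ (-s) ≠ 0 := zpow_ne_zero _ RatFunc.X_ne_zero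
  have hv0 : v ≠ 0 := mul_ne_zero hu0 hXs
  have hvord : ∀ c : ℂ, ordAt v c = 0 := by
    intro c
    rw [hvdef, ordAt_mul hu0 hXs, ordAt_zpow RatFunc.X_ne_zero, ordAt_X]
    by_cases hc : c = 0
    · subst hc; simp [hsdef]
    · rw [huc c hc, if_neg hc]; ring
  obtain ⟨γ, hγ0, hvγ⟩ := eq_C_of_ordAt_eq_zero hv0 hvord
  have huγ : u = RatFunc.C γ * RatFunc.X ^ s := by
    rw [hvdef, zpow_neg, ← div_eq_mul_inv,
      div_eq_iff (zpow_ne_zero s (RatFunc.X_ne_zero (K := ℂ)))] at hvγ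
    exact hvγ
  have e1 : sigmaq q u = RatFunc.C γ * ((RatFunc.C q * RatFunc.X) ^ s) := by
    rw [huγ, sigmaq_mul hq0 (RatC_ne_zero hγ0) (zpow_ne_zero _ RatFunc.X_ne_zero),
      sigmaq_C hq0, sigmaq_zpow hq0 RatFunc.X_ne_zero, sigmaq_X hq0]
  have e2 : RatFunc.C γ * ((RatFunc.C q * RatFunc.X) ^ s) = RatFunc.C ν * (RatFunc.C γ * RatFunc.X ^ s) := by
    rw [← e1, hσu, huγ]
  rw [mul_zpow, ← map_zpow₀ (RatFunc.C : ℂ →+* RatFunc ℂ)] at e2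
  have e3 : RatFunc.C γ * RatFunc.C (q ^ s) = RatFunc.C ν * RatFunc.C γ := by
    have hXs' : (RatFunc.X : RatFunc ℂ) ^ s ≠ 0 := zpow_ne_zero _ RatFunc.X_ne_zero
    apply mul_right_cancel₀ hXs'
    linear_combination e2
  rw [← map_mul, ← map_mul] at e3
  have e4 : γ * q ^ s = ν * γ := RatC_inj e3
  have e5 : ν = q ^ s := by
    have h6 : γ * ν = γ * q ^ s := by linear_combination -e4
    exact mul_left_cancel₀ hγ0 h6
  rw [hνdef] at e5
  have h7 := congrArg (· * μ) e5
  rw [mul_assoc, inv_mul_cancel₀ hμ, mul_one] at h7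
  exact h7.trans (mul_comm _ _)
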